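/- (Feasibility necessity for positive linear correlation of the Simon-like round function) Let n ≥ 1 and let λ_out, λ_in ∈ F₂ⁿ. If ((S^{−a}(λ_out) ∨ S^{−b}(λ_out)) ⊕ λ_in) ∧ λ_in ≠ 0ⁿ, i.e., λ_in has an active bit at a position where both S^{−a}(λ_out) and S^{−b}(λ_out) are inactive, then the linear correlation of the AND map g(x) = Sᵃ(x) ∧ Sᵇ(x) with input mask λ_in and output mask λ_out is zero: 2^{−n} Σ_{x ∈ F₂ⁿ} (−1)^{λ_in·x ⊕ λ_out·g(x)} = 0. -/

import Mathlib

/-- Circular left shift by `t` bits: `(rotL n t x) i = x ((i + t) % n)`. -/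
def rotL (n t : ℕ) (x : Fin n → Bool) : Fin n → Bool :=
  fun i => x ⟨(i.val + t) % n, Nat.mod_lt _ i.pos⟩

/-- Circular right shift by `t` bits: `(rotR n t x) i = x ((i - t) mod n)`. -/
def rotR (n t : ℕ) (x : Fin n → Bool) : Fin n → Bool :=
  fun i => x ⟨(i.val + (n - t % n)) % n, Nat.mod_lt _ i.pos⟩

/-- The inner product `Σ_i u_i v_i` over `F₂` of two `n`-bit vectors. -/
def dotB (n : ℕ) (u v : Fin n → Bool) : ZMod 2 :=
  ∑ i : Fin n, (if u i && v i then 1 else 0)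

lemma rot_key (n t i : ℕ) (hn : 0 < n) (hi : i < n) :
    ((i + t) % n + (n - t % n)) % n = i := by
  have hd := Nat.div_add_mod t n
  have hm : t % n < n := Nat.mod_lt _ hn
  rw [Nat.mod_add_mod]
  have he : i + t + (n - t % n) = i + n * (t / n + 1) := by
    rw [Nat.mul_succ]; omega
  rw [he, Nat.add_mul_mod_self_left, Nat.mod_eq_of_lt hi]

theorem simon_linear_early_abort (n a b : ℕ) (hn : 1 ≤ n)
    (lamOut lamIn : Fin n → Bool)
    (g : (Fin n → Bool) → Fin n → Bool)
    (hg : ∀ x, g x = fun i => rotL n a x i && rotL n b x i)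
    (hbad : (fun i => (xor (rotR n a lamOut i || rotR n b lamOut i) (lamIn i)) && lamIn i)
        ≠ (fun _ => false)) :
    (2 : ℝ) ^ (-(n : ℤ)) *
      ∑ x : Fin n → Bool,
        (-1 : ℝ) ^ ((dotB n lamIn x + dotB n lamOut (g x)).val) = 0 := by
  classical
  -- extract the bad bit position j
  have hbad' : ∃ j : Fin n,
      (xor (rotR n a lamOut j || rotR n b lamOut j) (lamIn j)) && lamIn j = true := by
    by_contra h
    push_neg at h
    apply hbad
    funext i
    have hi := h i
    simpa using hi
  obtain ⟨j, hj⟩ := hbad'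
  have hIn : lamIn j = true := by
    cases hli : lamIn j
    · rw [hli] at hj; simp at hj
    · rfl
  have hOa : rotR n a lamOut j = false := by
    cases h1 : rotR n a lamOut j
    · rfl
    · rw [h1, hIn] at hj; simp at hj
  have hOb : rotR n b lamOut j = false := by
    cases h1 : rotR n b lamOut j
    · rfl
    · rw [h1, hIn] at hj; simp at hj
  -- the flip involution
  set flip : (Fin n → Bool) → (Fin n → Bool) :=
    fun x => Function.update x j (!x j) with hflipdef
  have hinv : Function.Involutive flip := by
    intro x; funext i
    by_cases hij : i = j
    · subst hij; simp [hflipdef]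
    · simp [hflipdef, Function.update_of_ne hij]
  -- if the rotated index hits j, lamOut at the source must be active — contradiction
  have hidx : ∀ (t : ℕ) (i : Fin n), lamOut i = true → rotR n t lamOut j = false →
      (⟨(i.val + t) % n, Nat.mod_lt _ i.pos⟩ : Fin n) ≠ j := by
    intro t i hoi hro heq
    have hjval : j.val = (i.val + t) % n := by rw [← heq]
    have : rotR n t lamOut j = lamOut i := by
      unfold rotR
      congr 1
      apply Fin.ext
      show (j.val + (n - t % n)) % n = i.val
      rw [hjval]
      exact rot_key n t i.val (by omega) i.isLt
    rw [this, hoi] at hro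
    exact Bool.true_eq_false.mp hro
  -- g is unchanged on all positions where lamOut is active
  have h2 : ∀ x, dotB n lamOut (g (flip x)) = dotB n lamOut (g x) := by
    intro x
    unfold dotB
    apply Finset.sum_congr rfl
    intro i _
    by_cases hoi : lamOut i = true
    · have hga : g (flip x) i = g x i := by
        rw [congrFun (hg (flip x)) i, congrFun (hg x) i]
        simp only [rotL]
        rw [show flip x = Function.update x j (!x j) from rfl]
        rw [Function.update_of_ne (hidx a i hoi hOa),
            Function.update_of_ne (hidx b i hoi hOb)]
      rw [hga]
    · have : lamOut i = false := by simpa using hoi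
      simp [this]
  -- flipping bit j flips the lamIn dot product
  have h1 : ∀ x, dotB n lamIn (flip x) = dotB n lamIn x + 1 := by
    intro x
    unfold dotB
    rw [← Finset.sum_erase_add _ _ (Finset.mem_univ j),
        ← Finset.sum_erase_add (f := fun i => if lamIn i && x i then (1 : ZMod 2) else 0)
          _ (Finset.mem_univ j)]
    have hsame : ∑ i ∈ Finset.univ.erase j,
        (if lamIn i && flip x i then (1 : ZMod 2) else 0) =
        ∑ i ∈ Finset.univ.erase j, (if lamIn i && x i then (1 : ZMod 2) else 0) := by
      apply Finset.sum_congr rfl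
      intro i hi
      rw [show flip x = Function.update x j (!x j) from rfl,
        Function.update_of_ne (Finset.ne_of_mem_erase hi)]
    rw [hsame]
    rw [show flip x j = !x j by
      rw [show flip x = Function.update x j (!x j) from rfl, Function.update_self]]
    rw [hIn]
    have h11 : (1 : ZMod 2) + 1 = 0 := by decide
    cases hxj : x j <;> simp [add_assoc, h11]
  -- summand flips sign
  have hsign : ∀ x, (-1 : ℝ) ^ ((dotB n lamIn (flip x) + dotB n lamOut (g (flip x))).val)
      = - (-1 : ℝ) ^ ((dotB n lamIn x + dotB n lamOut (g x)).val) := by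
    intro x
    rw [h1 x, h2 x]
    have harr : dotB n lamIn x + 1 + dotB n lamOut (g x)
        = (dotB n lamIn x + dotB n lamOut (g x)) + 1 := by ring
    rw [harr]
    generalize dotB n lamIn x + dotB n lamOut (g x) = e
    fin_cases e
    · show (-1 : ℝ) ^ 1 = -(-1) ^ 0; norm_num
    · show (-1 : ℝ) ^ 0 = -(-1) ^ 1; norm_num
  -- conclude cancellation
  have hsum : ∑ x : Fin n → Bool,
      (-1 : ℝ) ^ ((dotB n lamIn x + dotB n lamOut (g x)).val) = 0 := by
    have hb :
        ∑ x : Fin n → Bool,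
          (-1 : ℝ) ^ ((dotB n lamIn (flip x) + dotB n lamOut (g (flip x))).val)
        = ∑ x : Fin n → Bool,
          (-1 : ℝ) ^ ((dotB n lamIn x + dotB n lamOut (g x)).val) :=
      Fintype.sum_bijective flip hinv.bijective _ _ (fun x => rfl)
    have hneg :
        ∑ x : Fin n → Bool,
          (-1 : ℝ) ^ ((dotB n lamIn (flip x) + dotB n lamOut (g (flip x))).val)
        = - ∑ x : Fin n → Bool,
          (-1 : ℝ) ^ ((dotB n lamIn x + dotB n lamOut (g x)).val) := by
      rw [← Finset.sum_neg_distrib]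
      exact Finset.sum_congr rfl (fun x _ => hsign x)
    linarith [hb, hneg]
  rw [hsum, mul_zero]
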